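/- arXiv:1806.05215 — 4 statements merged into one kernel-verified Lean document; each statement's English description precedes it below -/
import Mathlib

section
/- Let H be a real Hilbert space and f : H → ℝ a convex continuous function. Suppose there exists a sequence (ε_k) of positive reals with ε_k → 0 and, for each k, an element u_k ∈ H minimizing the functional u ↦ f(u) + ε_k·‖u‖² over H, such that sup_k ‖u_k‖ < ∞. Then f attains its infimum on H, i.e., there exists u* ∈ H with f(u*) ≤ f(u) for all u ∈ H. -/
open Filter Set

/-- If a convex continuous function on a real Hilbert space admits, along some
sequence `ε_k → 0⁺`, minimizers `u_k` of the Tikhonov-regularized functionals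
`f + ε_k‖·‖²` with `sup_k ‖u_k‖ < ∞`, then `f` attains its infimum. -/
theorem convex_attains_min_of_bounded_tikhonov_minimizers
    {H : Type*} [NormedAddCommGroup H] [InnerProductSpace ℝ H] [CompleteSpace H]
    (f : H → ℝ) (hconv : ConvexOn ℝ Set.univ f) (hcont : Continuous f)
    (ε : ℕ → ℝ) (hεpos : ∀ k, 0 < ε k) (hε0 : Tendsto ε atTop (nhds 0))
    (u : ℕ → H)
    (hmin : ∀ k, ∀ v : H, f (u k) + ε k * ‖u k‖ ^ 2 ≤ f v + ε k * ‖v‖ ^ 2)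
    (hbdd : ∃ M : ℝ, ∀ k, ‖u k‖ ≤ M) :
    ∃ ustar : H, ∀ v : H, f ustar ≤ f v := by
  obtain ⟨M, hM⟩ := hbdd
  -- Key inequality from strong convexity of the regularized functionals
  have key : ∀ k j, (ε k + ε j) / 2 * ‖u k - u j‖ ^ 2
      ≤ (ε k - ε j) * (‖u j‖ ^ 2 - ‖u k‖ ^ 2) := by
    intro k j
    set m : H := (1/2 : ℝ) • (u k + u j) with hm
    have hpar : ‖u k + u j‖ ^ 2 + ‖u k - u j‖ ^ 2 = 2 * (‖u k‖ ^ 2 + ‖u j‖ ^ 2) := by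
      have := parallelogram_law_with_norm ℝ (u k) (u j)
      nlinarith [this]
    have hms : ‖m‖ ^ 2 = ‖u k + u j‖ ^ 2 / 4 := by
      rw [hm, norm_smul]
      simp [abs_of_nonneg]
      ring
    have hconvm : f m ≤ (1/2 : ℝ) * f (u k) + (1/2 : ℝ) * f (u j) := by
      have := hconv.2 (mem_univ (u k)) (mem_univ (u j))
        (by norm_num : (0:ℝ) ≤ 1/2) (by norm_num : (0:ℝ) ≤ 1/2) (by norm_num)
      simpa [hm, smul_add] using this
    have h1 := hmin k m
    have h2 := hmin j m
    rw [hms] at h1 h2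
    have e1 : ε k * (‖u k + u j‖ ^ 2 / 4)
        = ε k * (‖u k‖ ^ 2 + ‖u j‖ ^ 2) / 2 - ε k * ‖u k - u j‖ ^ 2 / 4 := by
      have : ‖u k + u j‖ ^ 2 = 2 * (‖u k‖ ^ 2 + ‖u j‖ ^ 2) - ‖u k - u j‖ ^ 2 := by
        linarith
      rw [this]; ring
    have e2 : ε j * (‖u k + u j‖ ^ 2 / 4)
        = ε j * (‖u k‖ ^ 2 + ‖u j‖ ^ 2) / 2 - ε j * ‖u k - u j‖ ^ 2 / 4 := by
      have : ‖u k + u j‖ ^ 2 = 2 * (‖u k‖ ^ 2 + ‖u j‖ ^ 2) - ‖u k - u j‖ ^ 2 := by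
        linarith
      rw [this]; ring
    rw [e1] at h1
    rw [e2] at h2
    nlinarith [h1, h2, hconvm]
  -- extract a subsequence along which ε is strictly decreasing
  have hstep : ∀ n : ℕ, ∃ m, n < m ∧ ε m < ε n := by
    intro n
    have h1 : ∀ᶠ k in atTop, ε k < ε n := hε0.eventually (gt_mem_nhds (hεpos n))
    exact ((eventually_gt_atTop n).and h1).exists
  let φ : ℕ → ℕ := fun n => Nat.rec 0 (fun _ p => Classical.choose (hstep p)) n
  have hφsucc : ∀ n, φ n < φ (n + 1) ∧ ε (φ (n + 1)) < ε (φ n) := by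
    intro n
    exact Classical.choose_spec (hstep (φ n))
  have hφmono : StrictMono φ := strictMono_nat_of_lt_succ fun n => (hφsucc n).1
  have hεanti : StrictAnti (fun n => ε (φ n)) := strictAnti_nat_of_succ_lt fun n => (hφsucc n).2
  -- norms squared along the subsequence are monotone nondecreasing and bounded
  set a : ℕ → ℝ := fun i => ‖u (φ i)‖ ^ 2 with ha
  have hamono : Monotone a := by
    intro i j hij
    rcases eq_or_lt_of_le hij with rfl | hij
    · exact le_rfl
    · have hεlt : ε (φ j) < ε (φ i) := hεanti hij
      have hk := key (φ i) (φ j)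
      have hnn : 0 ≤ (ε (φ i) + ε (φ j)) / 2 * ‖u (φ i) - u (φ j)‖ ^ 2 :=
        mul_nonneg (by linarith [hεpos (φ i), hεpos (φ j)]) (sq_nonneg _)
      show ‖u (φ i)‖ ^ 2 ≤ ‖u (φ j)‖ ^ 2
      nlinarith [hk, hnn, hεlt]
  have habdd : ∀ i, a i ≤ M ^ 2 := by
    intro i
    have h1 := hM (φ i)
    have h2 : (0:ℝ) ≤ ‖u (φ i)‖ := norm_nonneg _
    show ‖u (φ i)‖ ^ 2 ≤ M ^ 2
    nlinarith
  have hbdda : BddAbove (Set.range a) := ⟨M ^ 2, by rintro x ⟨i, rfl⟩; exact habdd i⟩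
  set L : ℝ := ⨆ i, a i with hL
  have haL : ∀ i, a i ≤ L := fun i => le_ciSup hbdda i
  -- quantitative Cauchy estimate
  have hdiff : ∀ i j, i ≤ j → ‖u (φ j) - u (φ i)‖ ^ 2 ≤ 2 * (a j - a i) := by
    intro i j hij
    rcases eq_or_lt_of_le hij with rfl | hij
    · simp
    · have hεlt : ε (φ j) < ε (φ i) := hεanti hij
      have hk := key (φ i) (φ j)
      have hle : ‖u (φ i)‖ ^ 2 ≤ ‖u (φ j)‖ ^ 2 := hamono hij.le
      have hnorm : ‖u (φ j) - u (φ i)‖ = ‖u (φ i) - u (φ j)‖ := by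
        rw [norm_sub_rev]
      rw [hnorm]
      show ‖u (φ i) - u (φ j)‖ ^ 2 ≤ 2 * (‖u (φ j)‖ ^ 2 - ‖u (φ i)‖ ^ 2)
      have hpos : 0 < ε (φ j) := hεpos _
      nlinarith [hk, hpos, hεlt, sq_nonneg ‖u (φ i) - u (φ j)‖]
  have hcauchy : CauchySeq (fun i => u (φ i)) := by
    rw [Metric.cauchySeq_iff]
    intro δ hδ
    have hδ2 : 0 < δ ^ 2 / 2 := by positivity
    obtain ⟨iN, hiN⟩ : ∃ i, L - δ ^ 2 / 2 < a i := by
      by_contra h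
      push_neg at h
      have : L ≤ L - δ ^ 2 / 2 := ciSup_le h
      linarith
    refine ⟨iN, fun p hp q hq => ?_⟩
    wlog hpq : q ≤ p generalizing p q
    · rw [dist_comm]; exact this q hq p hp (le_of_not_ge hpq)
    have h1 : ‖u (φ p) - u (φ q)‖ ^ 2 ≤ 2 * (a p - a q) := hdiff q p hpq
    have h2 : a q ≥ a iN := hamono hq
    have h3 : a p ≤ L := haL p
    have hsq : ‖u (φ p) - u (φ q)‖ ^ 2 < δ ^ 2 := by nlinarith
    have : ‖u (φ p) - u (φ q)‖ < δ :=
      lt_of_pow_lt_pow_left₀ 2 hδ.le hsq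
    simpa [dist_eq_norm] using this
  obtain ⟨ustar, hust⟩ := cauchySeq_tendsto_of_complete hcauchy
  refine ⟨ustar, fun v => ?_⟩
  have hfl : Tendsto (fun i => f (u (φ i))) atTop (nhds (f ustar)) :=
    (hcont.tendsto ustar).comp hust
  have hεφ : Tendsto (fun i => ε (φ i)) atTop (nhds 0) :=
    hε0.comp (hφmono.tendsto_atTop)
  have hrhs : Tendsto (fun i => f v + ε (φ i) * ‖v‖ ^ 2) atTop (nhds (f v)) := by
    have : Tendsto (fun i => ε (φ i) * ‖v‖ ^ 2) atTop (nhds 0) := by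
      simpa using hεφ.mul_const (‖v‖ ^ 2)
    simpa using tendsto_const_nhds.add this
  refine le_of_tendsto_of_tendsto' hfl hrhs fun i => ?_
  have h1 := hmin (φ i) v
  have h2 : 0 ≤ ε (φ i) * ‖u (φ i)‖ ^ 2 :=
    mul_nonneg (hεpos _).le (sq_nonneg _)
  linarith
end

section
/- Let H be a real Hilbert space and f : H → ℝ a convex continuous function that attains its infimum on H. For each ε > 0, let u_ε ∈ H be a minimizer of the regularized functional u ↦ f(u) + ε·‖u‖². Then there exists u* ∈ H such that: (1) u* minimizes f; (2) ‖u*‖ ≤ ‖v‖ for every minimizer v of f; and (3) u_ε converges weakly to u* as ε → 0⁺, i.e., for every y ∈ H the inner product ⟨u_ε, y⟩ tends to ⟨u*, y⟩ along the filter of positive ε tending to 0. -/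
open Filter Set

/-- If a convex continuous function `f` on a real Hilbert space attains its
infimum and, for every `ε > 0`, `u ε` minimizes `f + ε‖·‖²`, then there is a
minimizer `u*` of `f`, of minimal norm among all minimizers, such that
`u ε → u*` weakly as `ε → 0⁺`. -/
theorem tikhonov_minimizers_weak_limit
    {H : Type*} [NormedAddCommGroup H] [InnerProductSpace ℝ H] [CompleteSpace H]
    (f : H → ℝ) (hconv : ConvexOn ℝ Set.univ f) (hcont : Continuous f)
    (hattain : ∃ v : H, ∀ w : H, f v ≤ f w)
    (u : ℝ → H)
    (hmin : ∀ ε : ℝ, 0 < ε → ∀ v : H, f (u ε) + ε * ‖u ε‖ ^ 2 ≤ f v + ε * ‖v‖ ^ 2) :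
    ∃ ustar : H,
      (∀ v : H, f ustar ≤ f v) ∧
      (∀ v : H, (∀ w : H, f v ≤ f w) → ‖ustar‖ ≤ ‖v‖) ∧
      (∀ y : H,
        Tendsto (fun ε : ℝ => (inner ℝ (u ε) y : ℝ)) (nhdsWithin 0 (Ioi 0))
          (nhds (inner ℝ ustar y))) := by
  obtain ⟨v₀, hv₀⟩ := hattain
  -- Key strong-convexity inequality
  have key : ∀ ε : ℝ, 0 < ε → ∀ w : H,
      ε / 2 * ‖u ε - w‖ ^ 2 ≤ (f w + ε * ‖w‖ ^ 2) - (f (u ε) + ε * ‖u ε‖ ^ 2) := by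
    intro ε hε w
    have hmid := hmin ε hε ((1/2 : ℝ) • u ε + (1/2 : ℝ) • w)
    have hc := hconv.2 (mem_univ (u ε)) (mem_univ w)
      (by norm_num : (0:ℝ) ≤ 1/2) (by norm_num : (0:ℝ) ≤ 1/2) (by norm_num)
    have hpar := parallelogram_law_with_norm ℝ (u ε) w
    have hs : ‖(1/2 : ℝ) • u ε + (1/2 : ℝ) • w‖ = ‖u ε + w‖ / 2 := by
      have h : (1/2:ℝ) • u ε + (1/2:ℝ) • w = (1/2:ℝ) • (u ε + w) := by module
      rw [h, norm_smul, Real.norm_eq_abs]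
      rw [abs_of_nonneg (by norm_num : (0:ℝ) ≤ 1/2)]
      ring
    rw [smul_eq_mul, smul_eq_mul] at hc
    rw [hs] at hmid
    have h2 : (‖u ε + w‖ / 2) ^ 2
        = (‖u ε‖ ^ 2 + ‖w‖ ^ 2) / 2 - ‖u ε - w‖ ^ 2 / 4 := by
      linear_combination hpar / 4
    rw [h2] at hmid
    nlinarith [hmid, hc]
  haveI hFne : (nhdsWithin (0:ℝ) (Ioi 0)).NeBot := nhdsGT_neBot 0
  -- squared norms bounded by any minimizer's
  have hsqle : ∀ ε : ℝ, 0 < ε → ∀ v : H, (∀ w, f v ≤ f w) → ‖u ε‖ ^ 2 ≤ ‖v‖ ^ 2 := by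
    intro ε hε v hv
    have k := key ε hε v
    have h1 := hv (u ε)
    nlinarith [sq_nonneg ‖u ε - v‖]
  have hnle : ∀ ε : ℝ, 0 < ε → ∀ v : H, (∀ w, f v ≤ f w) → ‖u ε‖ ≤ ‖v‖ := by
    intro ε hε v hv
    have := hsqle ε hε v hv
    nlinarith [norm_nonneg (u ε), norm_nonneg v]
  -- monotonicity of the norms
  have hmono : ∀ δ ε : ℝ, 0 < δ → δ ≤ ε → ‖u ε‖ ^ 2 ≤ ‖u δ‖ ^ 2 := by
    intro δ ε hδ hδε
    have hε : 0 < ε := lt_of_lt_of_le hδ hδε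
    rcases eq_or_lt_of_le hδε with h | h
    · rw [← h]
    · have h1 := hmin ε hε (u δ)
      have h2 := hmin δ hδ (u ε)
      nlinarith [mul_pos (sub_pos.mpr h) (sub_pos.mpr h)]
  set S : Set ℝ := (fun δ : ℝ => ‖u δ‖ ^ 2) '' Ioi 0 with hS
  have hSne : S.Nonempty := ⟨‖u 1‖ ^ 2, ⟨1, by norm_num, rfl⟩⟩
  have hSbdd : BddAbove S := ⟨‖v₀‖ ^ 2, by
    rintro x ⟨δ, hδ, rfl⟩
    exact hsqle δ hδ v₀ hv₀⟩
  have hub : ∀ ε : ℝ, 0 < ε → ‖u ε‖ ^ 2 ≤ sSup S := fun ε hε => le_csSup hSbdd ⟨ε, hε, rfl⟩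
  -- Cauchy
  have hC : Cauchy (Filter.map u (nhdsWithin (0:ℝ) (Ioi 0))) := by
    rw [Metric.cauchy_iff]
    refine ⟨hFne.map u, ?_⟩
    intro η hη
    obtain ⟨x, ⟨δ₀, hδ₀, rfl⟩, hx⟩ :=
      exists_lt_of_lt_csSup hSne (show sSup S - η ^ 2 / 8 < sSup S by nlinarith)
    have hgen : ∀ a b : ℝ, 0 < a → a ≤ δ₀ → 0 < b → b ≤ a → ‖u a - u b‖ ^ 2 ≤ η ^ 2 / 4 := by
      intro a b ha0 ha hb0 hba
      have k := key a ha0 (u b)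
      have h2 := hmin b hb0 (u a)
      have hubL := hub b hb0
      have hla : sSup S - η ^ 2 / 8 < ‖u a‖ ^ 2 := lt_of_lt_of_le hx (hmono a δ₀ ha0 ha)
      have hD : ‖u b‖ ^ 2 - ‖u a‖ ^ 2 ≤ η ^ 2 / 8 := by linarith
      have hab : (0:ℝ) ≤ a - b := by linarith
      have hkey2 : (a - b) * (‖u b‖ ^ 2 - ‖u a‖ ^ 2) ≤ a * (η ^ 2 / 8) := by
        have h3 : (a - b) * (‖u b‖ ^ 2 - ‖u a‖ ^ 2) ≤ (a - b) * (η ^ 2 / 8) :=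
          mul_le_mul_of_nonneg_left hD hab
        nlinarith
      nlinarith
    refine ⟨u '' Ioc 0 δ₀, ?_, ?_⟩
    · exact mem_map.mpr (mem_of_superset (Ioc_mem_nhdsGT_of_mem ⟨le_refl 0, hδ₀⟩)
        (subset_preimage_image u _))
    · rintro x ⟨a, ⟨ha0, ha⟩, rfl⟩ y ⟨b, ⟨hb0, hb⟩, rfl⟩
      rw [dist_eq_norm]
      rcases le_total b a with hba | hab
      · have := hgen a b ha0 ha hb0 hba
        nlinarith [norm_nonneg (u a - u b)]
      · have := hgen b a hb0 hb ha0 hab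
        rw [norm_sub_rev]
        nlinarith [norm_nonneg (u b - u a)]
  obtain ⟨ustar, hT⟩ := CompleteSpace.complete hC
  have hT : Tendsto u (nhdsWithin (0:ℝ) (Ioi 0)) (nhds ustar) := hT
  have hε0 : Tendsto (fun ε : ℝ => ε) (nhdsWithin (0:ℝ) (Ioi 0)) (nhds 0) :=
    tendsto_id.mono_left nhdsWithin_le_nhds
  refine ⟨ustar, ?_, ?_, ?_⟩
  · intro v
    have hev : ∀ᶠ ε in nhdsWithin (0:ℝ) (Ioi 0), f (u ε) ≤ f v + ε * ‖v‖ ^ 2 := by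
      filter_upwards [self_mem_nhdsWithin] with ε hε
      have h := hmin ε hε v
      nlinarith [sq_nonneg ‖u ε‖, mul_nonneg (le_of_lt hε) (sq_nonneg ‖u ε‖)]
    have h1 : Tendsto (fun ε => f (u ε)) (nhdsWithin (0:ℝ) (Ioi 0)) (nhds (f ustar)) :=
      (hcont.tendsto ustar).comp hT
    have h2 : Tendsto (fun ε : ℝ => f v + ε * ‖v‖ ^ 2) (nhdsWithin (0:ℝ) (Ioi 0))
        (nhds (f v)) := by
      have h3 : Tendsto (fun ε : ℝ => ε * ‖v‖ ^ 2) (nhdsWithin (0:ℝ) (Ioi 0)) (nhds 0) := by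
        simpa using hε0.mul_const (‖v‖ ^ 2)
      simpa using (tendsto_const_nhds : Tendsto (fun _ : ℝ => f v) (nhdsWithin (0:ℝ) (Ioi 0)) (nhds (f v))).add h3
    exact le_of_tendsto_of_tendsto h1 h2 hev
  · intro v hv
    have h1 : Tendsto (fun ε => ‖u ε‖) (nhdsWithin (0:ℝ) (Ioi 0)) (nhds ‖ustar‖) :=
      (continuous_norm.tendsto ustar).comp hT
    refine le_of_tendsto h1 ?_
    filter_upwards [self_mem_nhdsWithin] with ε hε
    exact hnle ε hε v hv
  · intro y
    have hco : Continuous fun w : H => (inner ℝ w y : ℝ) := continuous_id.inner continuous_const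
    exact (hco.tendsto ustar).comp hT
end

section
/- Let H be a real Hilbert space and f : H → ℝ a convex continuous function that attains its infimum on H. For each ε > 0, let u_ε ∈ H be a minimizer of the regularized functional u ↦ f(u) + ε·‖u‖². Then the family (u_ε) converges strongly (in norm) as ε → 0⁺ to an element u* ∈ H that minimizes f and satisfies ‖u*‖ ≤ ‖v‖ for every minimizer v of f. -/
open Filter Set

/-- If a convex continuous function `f` on a real Hilbert space attains its
infimum and, for every `ε > 0`, `u ε` minimizes `f + ε‖·‖²`, then the family
`u ε` converges strongly, as `ε → 0⁺`, to a minimizer `u*` of `f` of minimal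
norm among all minimizers. -/
theorem tikhonov_minimizers_strong_limit
    {H : Type*} [NormedAddCommGroup H] [InnerProductSpace ℝ H] [CompleteSpace H]
    (f : H → ℝ) (hconv : ConvexOn ℝ Set.univ f) (hcont : Continuous f)
    (hattain : ∃ v : H, ∀ w : H, f v ≤ f w)
    (u : ℝ → H)
    (hmin : ∀ ε : ℝ, 0 < ε → ∀ v : H, f (u ε) + ε * ‖u ε‖ ^ 2 ≤ f v + ε * ‖v‖ ^ 2) :
    ∃ ustar : H,
      (∀ v : H, f ustar ≤ f v) ∧
      (∀ v : H, (∀ w : H, f v ≤ f w) → ‖ustar‖ ≤ ‖v‖) ∧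
      Tendsto u (nhdsWithin 0 (Ioi 0)) (nhds ustar) := by
  obtain ⟨v0, hv0⟩ := hattain
  -- norm bound by any minimizer
  have hbound : ∀ v : H, (∀ w : H, f v ≤ f w) → ∀ ε : ℝ, 0 < ε → ‖u ε‖ ≤ ‖v‖ := by
    intro v hv ε hε
    have h1 := hmin ε hε v
    have h2 := hv (u ε)
    have hsq : ‖u ε‖ ^ 2 ≤ ‖v‖ ^ 2 := by nlinarith
    exact le_of_pow_le_pow_left₀ two_ne_zero (norm_nonneg v) hsq
  -- monotonicity of ε ↦ ‖u ε‖²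
  have hmono : ∀ ε δ : ℝ, 0 < ε → ε ≤ δ → ‖u δ‖ ^ 2 ≤ ‖u ε‖ ^ 2 := by
    intro ε δ hε hεδ
    rcases eq_or_lt_of_le hεδ with rfl | hlt
    · exact le_rfl
    · have hδ : 0 < δ := hε.trans hlt
      have h1 := hmin ε hε (u δ)
      have h2 := hmin δ hδ (u ε)
      nlinarith
  -- key Cauchy estimate via convexity + parallelogram law
  have hkey : ∀ ε δ : ℝ, 0 < ε → ε ≤ δ →
      ‖u ε - u δ‖ ^ 2 ≤ 2 * (‖u ε‖ ^ 2 - ‖u δ‖ ^ 2) := by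
    intro ε δ hε hεδ
    have hδ : 0 < δ := lt_of_lt_of_le hε hεδ
    set m : H := (1/2 : ℝ) • u ε + (1/2 : ℝ) • u δ with hm_def
    have hfm : f m ≤ (1/2 : ℝ) * f (u ε) + (1/2 : ℝ) * f (u δ) :=
      hconv.2 (mem_univ _) (mem_univ _) (by norm_num) (by norm_num) (by norm_num)
    have h1 := hmin ε hε m
    have h2 := hmin δ hδ m
    have hmn : ‖m‖ = (1/2 : ℝ) * ‖u ε + u δ‖ := by
      rw [hm_def, ← smul_add, norm_smul]
      norm_num
    have hmsq : ‖m‖ ^ 2 = (1/4 : ℝ) * ‖u ε + u δ‖ ^ 2 := by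
      rw [hmn]; ring
    have ha := norm_add_sq_real (u ε) (u δ)
    have hs := norm_sub_sq_real (u ε) (u δ)
    have hab : ‖u δ‖ ^ 2 ≤ ‖u ε‖ ^ 2 := hmono ε δ hε hεδ
    nlinarith [mul_nonneg hε.le (sub_nonneg.2 hab)]
  -- the supremum of ‖u ε‖² over ε > 0
  set S : Set ℝ := (fun ε => ‖u ε‖ ^ 2) '' Ioi 0 with hS_def
  have hSne : S.Nonempty := ⟨‖u 1‖ ^ 2, ⟨1, by norm_num, rfl⟩⟩
  have hSbdd : BddAbove S := by
    refine ⟨‖v0‖ ^ 2, ?_⟩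
    rintro x ⟨ε, hε, rfl⟩
    show ‖u ε‖ ^ 2 ≤ ‖v0‖ ^ 2
    have h := hbound v0 hv0 ε hε
    nlinarith [norm_nonneg (u ε)]
  set L : ℝ := sSup S with hL_def
  -- Cauchy filter
  have hcauchy : Cauchy (map u (nhdsWithin 0 (Ioi 0))) := by
    rw [Metric.cauchy_iff]
    refine ⟨map_neBot, fun η hη => ?_⟩
    obtain ⟨x, ⟨δ, hδ, rfl⟩, hx⟩ : ∃ x ∈ S, L - η ^ 2 / 4 < x :=
      exists_lt_of_lt_csSup hSne (by nlinarith)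
    have key2 : ∀ ε₁ ε₂ : ℝ, ε₁ ∈ Ioc 0 δ → ε₂ ∈ Ioc 0 δ → ε₁ ≤ ε₂ →
        dist (u ε₁) (u ε₂) < η := by
      intro ε₁ ε₂ h1 h2 hle
      have hA := hkey ε₁ ε₂ h1.1 hle
      have hB : ‖u ε₁‖ ^ 2 ≤ L := le_csSup hSbdd ⟨ε₁, h1.1, rfl⟩
      have hC : L - η ^ 2 / 4 < ‖u ε₂‖ ^ 2 := lt_of_lt_of_le hx (hmono ε₂ δ h2.1 h2.2)
      rw [dist_eq_norm]
      nlinarith [norm_nonneg (u ε₁ - u ε₂)]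
    refine ⟨u '' Ioc 0 δ, image_mem_map (Ioc_mem_nhdsGT_of_mem ⟨le_refl 0, hδ⟩), ?_⟩
    rintro a ⟨ε₁, h1, rfl⟩ b ⟨ε₂, h2, rfl⟩
    rcases le_total ε₁ ε₂ with h | h
    · exact key2 ε₁ ε₂ h1 h2 h
    · rw [dist_comm]; exact key2 ε₂ ε₁ h2 h1 h
  obtain ⟨ustar, hust⟩ := CompleteSpace.complete hcauchy
  have htend : Tendsto u (nhdsWithin 0 (Ioi 0)) (nhds ustar) := hust
  refine ⟨ustar, ?_, ?_, htend⟩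
  · intro v
    have h1 : Tendsto (fun ε => f (u ε)) (nhdsWithin 0 (Ioi 0)) (nhds (f ustar)) :=
      (hcont.tendsto ustar).comp htend
    have h2 : Tendsto (fun ε : ℝ => f v + ε * ‖v‖ ^ 2) (nhdsWithin 0 (Ioi 0))
        (nhds (f v)) := by
      have : Tendsto (fun ε : ℝ => f v + ε * ‖v‖ ^ 2) (nhds 0)
          (nhds (f v + 0 * ‖v‖ ^ 2)) := by
        exact tendsto_const_nhds.add ((tendsto_id.mul tendsto_const_nhds))
      simpa using this.mono_left nhdsWithin_le_nhds
    refine le_of_tendsto_of_tendsto h1 h2 ?_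
    filter_upwards [self_mem_nhdsWithin] with ε hε
    have hε' : (0:ℝ) < ε := hε
    have := hmin ε hε' v
    nlinarith [sq_nonneg ‖u ε‖]
  · intro v hv
    have h1 : Tendsto (fun ε => ‖u ε‖) (nhdsWithin 0 (Ioi 0)) (nhds ‖ustar‖) :=
      (continuous_norm.tendsto ustar).comp htend
    refine le_of_tendsto h1 ?_
    filter_upwards [self_mem_nhdsWithin] with ε hε
    exact hbound v hv ε hε
end

section
/- Let H be a real Hilbert space and f : H → ℝ a convex continuous function. Suppose that for each ε > 0 an element u_ε ∈ H is given which minimizes the regularized functional u ↦ f(u) + ε·‖u‖² over H. Then the following are equivalent: (i) f attains its infimum on H (there exists u* with f(u*) ≤ f(u) for all u); (ii) the family (u_ε)_{ε>0} is bounded, i.e., sup_{ε>0} ‖u_ε‖ < ∞; (iii) the family (u_ε)_{ε>0} converges strongly in H as ε → 0⁺ (there exists v ∈ H with ‖u_ε − v‖ → 0 along the filter of positive ε tending to 0). Moreover, whenever (i), (ii), or (iii) holds, the strong limit of (u_ε) as ε → 0⁺ is a minimizer of f. -/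
open Filter Set

/-- Strong convexity estimate for the Tikhonov-regularized functional. -/
private lemma tikhonov_strong {H : Type*} [NormedAddCommGroup H] [InnerProductSpace ℝ H]
    (f : H → ℝ) (hconv : ConvexOn ℝ Set.univ f)
    (u : ℝ → H)
    (hmin : ∀ ε : ℝ, 0 < ε → ∀ v : H, f (u ε) + ε * ‖u ε‖ ^ 2 ≤ f v + ε * ‖v‖ ^ 2)
    (ε : ℝ) (hε : 0 < ε) (v : H) :
    f (u ε) + ε * ‖u ε‖ ^ 2 + ε / 2 * ‖v - u ε‖ ^ 2 ≤ f v + ε * ‖v‖ ^ 2 := by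
  have hm := hmin ε hε ((1/2 : ℝ) • u ε + (1/2 : ℝ) • v)
  have hc := hconv.2 (mem_univ (u ε)) (mem_univ v) (by norm_num : (0:ℝ) ≤ 1/2)
      (by norm_num : (0:ℝ) ≤ 1/2) (by norm_num)
  have hpar : ‖(1/2 : ℝ) • u ε + (1/2 : ℝ) • v‖ ^ 2
      = 1/2 * ‖u ε‖^2 + 1/2 * ‖v‖^2 - 1/4 * ‖v - u ε‖^2 := by
    have h := parallelogram_law_with_norm ℝ (u ε) v
    have h2 : (1/2 : ℝ) • u ε + (1/2 : ℝ) • v = (1/2 : ℝ) • (u ε + v) := by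
      rw [smul_add]
    rw [h2, norm_smul]
    have h3 : ‖u ε - v‖ = ‖v - u ε‖ := norm_sub_rev _ _
    simp only [Real.norm_eq_abs]
    rw [show |(1/2 : ℝ)| = 1/2 by norm_num]
    have h' : ‖u ε + v‖ ^ 2 + ‖v - u ε‖ ^ 2 = 2 * (‖u ε‖ ^ 2 + ‖v‖ ^ 2) := by
      rw [← h3]; ring_nf; ring_nf at h; linarith
    nlinarith [h']
  rw [hpar] at hm
  simp only [smul_eq_mul] at hc
  nlinarith [hm, hc]

/-- Abstract form of Theorem 3.1: for a convex continuous `f` on a real Hilbert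
space with Tikhonov minimizers `u ε` of `f + ε‖·‖²` (for each `ε > 0`), the
following are equivalent: (i) `f` attains its infimum; (ii) the family
`(u ε)_{ε>0}` is bounded; (iii) `u ε` converges strongly as `ε → 0⁺`.
Moreover, any strong limit of `u ε` as `ε → 0⁺` is a minimizer of `f`. -/
theorem tikhonov_tfae
    {H : Type*} [NormedAddCommGroup H] [InnerProductSpace ℝ H] [CompleteSpace H]
    (f : H → ℝ) (hconv : ConvexOn ℝ Set.univ f) (hcont : Continuous f)
    (u : ℝ → H)
    (hmin : ∀ ε : ℝ, 0 < ε → ∀ v : H, f (u ε) + ε * ‖u ε‖ ^ 2 ≤ f v + ε * ‖v‖ ^ 2) :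
    ((∃ ustar : H, ∀ v : H, f ustar ≤ f v) ↔ (∃ M : ℝ, ∀ ε : ℝ, 0 < ε → ‖u ε‖ ≤ M)) ∧
    ((∃ ustar : H, ∀ v : H, f ustar ≤ f v) ↔
      (∃ v : H, Tendsto u (nhdsWithin 0 (Ioi 0)) (nhds v))) ∧
    (∀ v : H, Tendsto u (nhdsWithin 0 (Ioi 0)) (nhds v) → ∀ w : H, f v ≤ f w) := by
  have key := tikhonov_strong f hconv u hmin
  -- Part 3: any strong limit is a minimizer.
  have part3 : ∀ v : H, Tendsto u (nhdsWithin 0 (Ioi 0)) (nhds v) → ∀ w : H, f v ≤ f w := by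
    intro v hv w
    have hid : Tendsto (fun ε : ℝ => ε) (nhdsWithin 0 (Ioi 0)) (nhds 0) :=
      tendsto_id.mono_left nhdsWithin_le_nhds
    have hn : Tendsto (fun ε : ℝ => ‖u ε‖ ^ 2) (nhdsWithin 0 (Ioi 0)) (nhds (‖v‖ ^ 2)) :=
      (((continuous_pow 2).comp continuous_norm).tendsto v).comp hv
    have h1 : Tendsto (fun ε : ℝ => f (u ε) + ε * ‖u ε‖ ^ 2)
        (nhdsWithin 0 (Ioi 0)) (nhds (f v + 0 * ‖v‖ ^ 2)) :=
      ((hcont.tendsto v).comp hv).add (hid.mul hn)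
    have h2 : Tendsto (fun ε : ℝ => f w + ε * ‖w‖ ^ 2)
        (nhdsWithin 0 (Ioi 0)) (nhds (f w + 0 * ‖w‖ ^ 2)) :=
      tendsto_const_nhds.add (hid.mul tendsto_const_nhds)
    have hev : ∀ᶠ ε : ℝ in nhdsWithin 0 (Ioi 0),
        f (u ε) + ε * ‖u ε‖ ^ 2 ≤ f w + ε * ‖w‖ ^ 2 := by
      filter_upwards [self_mem_nhdsWithin] with ε hε
      exact hmin ε hε w
    have := le_of_tendsto_of_tendsto h1 h2 hev
    simpa using this
  -- (i) → (ii)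
  have h12 : (∃ ustar : H, ∀ v : H, f ustar ≤ f v) →
      (∃ M : ℝ, ∀ ε : ℝ, 0 < ε → ‖u ε‖ ≤ M) := by
    rintro ⟨ustar, hstar⟩
    refine ⟨‖ustar‖, fun ε hε => ?_⟩
    have h1 := hmin ε hε ustar
    have h2 := hstar (u ε)
    have h3 : ε * ‖u ε‖ ^ 2 ≤ ε * ‖ustar‖ ^ 2 := by linarith
    have h4 : ‖u ε‖ ^ 2 ≤ ‖ustar‖ ^ 2 := le_of_mul_le_mul_left h3 hε
    nlinarith [norm_nonneg (u ε), norm_nonneg ustar]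
  -- (ii) → (iii)
  have h23 : (∃ M : ℝ, ∀ ε : ℝ, 0 < ε → ‖u ε‖ ≤ M) →
      (∃ v : H, Tendsto u (nhdsWithin 0 (Ioi 0)) (nhds v)) := by
    rintro ⟨M, hM⟩
    have mono : ∀ δ ε : ℝ, 0 < δ → δ ≤ ε → ‖u ε‖ ^ 2 ≤ ‖u δ‖ ^ 2 := by
      intro δ ε hδ hde
      rcases eq_or_lt_of_le hde with rfl | h
      · exact le_refl _
      · have h1 := hmin ε (hδ.trans h) (u δ)
        have h2 := hmin δ hδ (u ε)
        nlinarith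
    have cb : ∀ δ ε : ℝ, 0 < δ → δ ≤ ε → ‖u δ - u ε‖ ^ 2 ≤ 2 * (‖u δ‖ ^ 2 - ‖u ε‖ ^ 2) := by
      intro δ ε hδ hde
      have hε : 0 < ε := hδ.trans_le hde
      have h1 := key ε hε (u δ)
      have h2 := hmin δ hδ (u ε)
      have h3 := mono δ ε hδ hde
      nlinarith
    set S : Set ℝ := (fun ε => ‖u ε‖ ^ 2) '' Ioi 0 with hS
    have hne : S.Nonempty := ⟨‖u 1‖ ^ 2, ⟨1, by norm_num, rfl⟩⟩
    have hbdd : BddAbove S := by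
      refine ⟨M ^ 2, ?_⟩
      rintro x ⟨ε, hε, rfl⟩
      have := hM ε hε
      simp only []
      nlinarith [norm_nonneg (u ε)]
    set L := sSup S with hL
    have hC : Cauchy (map u (nhdsWithin (0:ℝ) (Ioi 0))) := by
      rw [Metric.cauchy_iff]
      refine ⟨Filter.map_neBot, fun η hη => ?_⟩
      obtain ⟨x, ⟨ε₀, hε₀, rfl⟩, hx⟩ :=
        exists_lt_of_lt_csSup hne (show L - η ^ 2 / 8 < L by nlinarith)
      simp only [] at hx
      refine ⟨u '' (Ioc 0 ε₀), ?_, ?_⟩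
      · rw [mem_map]
        exact mem_of_superset (Ioc_mem_nhdsGT_of_mem ⟨le_refl 0, hε₀⟩)
          (subset_preimage_image u _)
      · rintro x ⟨a, ha, rfl⟩ y ⟨b, hb, rfl⟩
        rw [dist_eq_norm]
        have bound : ∀ c d : ℝ, c ∈ Ioc (0:ℝ) ε₀ → d ∈ Ioc (0:ℝ) ε₀ → c ≤ d →
            ‖u c - u d‖ ^ 2 < η ^ 2 := by
          intro c d hc hd hcd
          have h1 := cb c d hc.1 hcd
          have h2 : ‖u c‖ ^ 2 ≤ L := le_csSup hbdd ⟨c, hc.1, rfl⟩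
          have h3 : ‖u ε₀‖ ^ 2 ≤ ‖u d‖ ^ 2 := mono d ε₀ hd.1 hd.2
          nlinarith
        have : ‖u a - u b‖ ^ 2 < η ^ 2 := by
          rcases le_total a b with hab | hab
          · exact bound a b ha hb hab
          · rw [norm_sub_rev]; exact bound b a hb ha hab
        exact lt_of_pow_lt_pow_left₀ 2 hη.le this
    obtain ⟨v, hv⟩ := CompleteSpace.complete hC
    exact ⟨v, hv⟩
  -- (iii) → (i)
  have h31 : (∃ v : H, Tendsto u (nhdsWithin 0 (Ioi 0)) (nhds v)) →
      (∃ ustar : H, ∀ v : H, f ustar ≤ f v) := by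
    rintro ⟨v, hv⟩
    exact ⟨v, part3 v hv⟩
  exact ⟨⟨h12, fun h => h31 (h23 h)⟩, ⟨fun h => h23 (h12 h), h31⟩, part3⟩
end
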